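/- (Martinez-Maure, Lemma 1.) Let h : ℝ² \ {0} → ℝ be positively 1-homogeneous and C², with plane hedgehog map x_h : S¹ → ℝ², x_h(p) = ∇h(p). Suppose s ∈ x_h(S¹) is an extremal point of the hedgehog in direction n ∈ S¹, i.e., ⟨x_h(p), n⟩ ≤ ⟨s, n⟩ for all p ∈ S¹. Then the connected components of x_h^{-1}(s) in S¹ are separated from one another by the points n and −n; precisely, if Γ ⊂ S¹ is a closed arc whose two endpoints lie in x_h^{-1}(s) and whose interior is disjoint from {n, −n}, then Γ ⊂ x_h^{-1}(s). -/

import Mathlib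

/- Plane hedgehogs: for a positively 1-homogeneous `C²` function
`h : ℝ² \ {0} → ℝ`, the plane hedgehog map is `x_h p = gradient h p`,
`p ∈ S¹`. An arc of `S¹` is parametrized as
`θ ↦ (cos θ) • a + (sin θ) • b` for an orthonormal basis `(a, b)`. -/

open scoped RealInnerProductSpace
noncomputable section

abbrev E2 := EuclideanSpace ℝ (Fin 2)

/-- `h` is positively 1-homogeneous on `ℝ² \ {0}`. -/
def PosHomog2 (h : E2 → ℝ) : Prop :=
  ∀ t : ℝ, 0 < t → ∀ u : E2, u ≠ 0 → h (t • u) = t * h u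

section AuxHedgehog

open Set Filter Topology

/-- Decomposition of a vector of `E2` in an orthonormal frame. -/
lemma frame_decomp_aux (a b : E2) (ha : ‖a‖ = 1) (hb : ‖b‖ = 1) (hab : ⟪a, b⟫ = 0)
    (v : E2) : v = ⟪v, a⟫ • a + ⟪v, b⟫ • b := by
  have haa : ⟪a, a⟫ = 1 := by rw [real_inner_self_eq_norm_mul_norm, ha]; norm_num
  have hbb : ⟪b, b⟫ = 1 := by rw [real_inner_self_eq_norm_mul_norm, hb]; norm_num
  have hba : ⟪b, a⟫ = 0 := by rw [real_inner_comm]; exact hab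
  have hon : Orthonormal ℝ ![a, b] := by
    rw [orthonormal_iff_ite]
    intro i j
    fin_cases i <;> fin_cases j <;>
      simp only [Matrix.cons_val_zero, Matrix.cons_val_one, Matrix.head_cons,
        Fin.zero_eta, Fin.mk_one] <;>
      simp only [haa, hbb, hab, hba] <;> norm_num
  have hcard : Fintype.card (Fin 2) = Module.finrank ℝ E2 := by
    simp [finrank_euclideanSpace_fin]
  let B : Module.Basis (Fin 2) ℝ E2 := basisOfOrthonormalOfCardEqFinrank hon hcard
  have hspan : Submodule.span ℝ (Set.range ![a, b]) = ⊤ := by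
    have := B.span_eq
    rwa [coe_basisOfOrthonormalOfCardEqFinrank] at this
  let OB : OrthonormalBasis (Fin 2) ℝ E2 := OrthonormalBasis.mk hon hspan.ge
  have hOB : ⇑OB = ![a, b] := OrthonormalBasis.coe_mk hon hspan.ge
  have h2 := OB.sum_repr' v
  rw [hOB] at h2
  simp only [Fin.sum_univ_two, Matrix.cons_val_zero, Matrix.cons_val_one,
    Matrix.head_cons] at h2
  rw [real_inner_comm a v, real_inner_comm b v]
  exact h2.symm

/-- The core one-dimensional analytic lemma. -/
lemma core_lemma_aux (θ₁ θ₂ : ℝ) (hlt : θ₁ < θ₂)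
    (u v F W R : ℝ → ℝ)
    (hu : ∀ θ, HasDerivAt u (v θ) θ)
    (hv : ∀ θ, HasDerivAt v (-u θ) θ)
    (hF : ∀ θ, HasDerivAt F (-(R θ * v θ)) θ)
    (hW : ∀ θ, HasDerivAt W (-(R θ * u θ)) θ)
    (hpyth : ∀ θ, u θ ^ 2 + v θ ^ 2 = 1)
    (hF1 : F θ₁ = 0) (hF2 : F θ₂ = 0) (hW1 : W θ₁ = 0) (hW2 : W θ₂ = 0)
    (hFpos : ∀ θ ∈ Set.Ioo θ₁ θ₂, 0 ≤ F θ)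
    (hvpos : ∀ θ ∈ Set.Ioo θ₁ θ₂, 0 < v θ) :
    ∀ θ ∈ Set.Ioo θ₁ θ₂, F θ = 0 ∧ W θ = 0 := by
  set P : ℝ → ℝ := fun θ => F θ * u θ - W θ * v θ with hPdef
  set P' : ℝ → ℝ := fun θ => F θ * v θ + W θ * u θ with hP'def
  have hP : ∀ θ, HasDerivAt P (P' θ) θ := by
    intro θ
    have h2 := ((hF θ).mul (hu θ)).sub ((hW θ).mul (hv θ))
    refine h2.congr_deriv (Eq.symm ?_)
    simp only [hP'def]
    ring
  have hPv : ∀ θ, P' θ * v θ + P θ * u θ = F θ := by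
    intro θ
    simp only [hPdef, hP'def]
    linear_combination F θ * hpyth θ
  have hP1 : P θ₁ = 0 := by simp [hPdef, hF1, hW1]
  have hP2 : P θ₂ = 0 := by simp [hPdef, hF2, hW2]
  have hP'1 : P' θ₁ = 0 := by simp [hP'def, hF1, hW1]
  have hP'2 : P' θ₂ = 0 := by simp [hP'def, hF2, hW2]
  set g : ℝ → ℝ := fun θ => P θ / v θ with hgdef
  have hg : ∀ θ ∈ Set.Ioo θ₁ θ₂, HasDerivAt g (F θ / v θ ^ 2) θ := by
    intro θ hθ
    have hvne : v θ ≠ 0 := (hvpos θ hθ).ne'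
    have h2 := (hP θ).div (hv θ) hvne
    have key : (P' θ * v θ - P θ * -u θ) / v θ ^ 2 = F θ / v θ ^ 2 := by
      rw [← hPv θ]; ring
    rw [← key]
    exact h2
  have hvc : Continuous v := by
    have hd : Differentiable ℝ v := fun θ => (hv θ).differentiableAt
    exact hd.continuous
  have hPc : Continuous P := by
    have hd : Differentiable ℝ P := fun θ => (hP θ).differentiableAt
    exact hd.continuous
  have hmono : MonotoneOn g (Set.Ioo θ₁ θ₂) := by
    apply monotoneOn_of_deriv_nonneg (convex_Ioo θ₁ θ₂)
    · intro θ hθ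
      exact ((hg θ hθ).differentiableAt).continuousAt.continuousWithinAt
    · rw [interior_Ioo]
      intro θ hθ
      exact ((hg θ hθ).differentiableAt).differentiableWithinAt
    · rw [interior_Ioo]
      intro θ hθ
      rw [(hg θ hθ).deriv]
      exact div_nonneg (hFpos θ hθ) (sq_nonneg _)
  have hlim : ∀ c : ℝ, P c = 0 → P' c = 0 → 0 ≤ v c →
      Filter.Tendsto g (𝓝[≠] c) (𝓝 0) := by
    intro c hPc0 hP'c0 hvc0
    rcases eq_or_lt_of_le hvc0 with hvz | hvp
    · have huc : u c ≠ 0 := by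
        intro hu0
        have := hpyth c
        rw [hu0, ← hvz] at this
        norm_num at this
      have hPs : Filter.Tendsto (slope P c) (𝓝[≠] c) (𝓝 (P' c)) :=
        hasDerivAt_iff_tendsto_slope.1 (hP c)
      have hvs : Filter.Tendsto (slope v c) (𝓝[≠] c) (𝓝 (-u c)) :=
        hasDerivAt_iff_tendsto_slope.1 (hv c)
      have hdiv : Filter.Tendsto (fun θ => slope P c θ / slope v c θ) (𝓝[≠] c)
          (𝓝 (P' c / (-u c))) := hPs.div hvs (by simpa using huc)
      rw [hP'c0, zero_div] at hdiv
      apply hdiv.congr'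
      filter_upwards [self_mem_nhdsWithin] with θ hθ
      have hne : θ - c ≠ 0 := sub_ne_zero.2 hθ
      simp only [slope_def_field, hgdef]
      rw [hPc0, ← hvz]
      field_simp
      rw [sub_zero, sub_zero]
    · have ht : Filter.Tendsto g (𝓝 c) (𝓝 (P c / v c)) :=
        (hPc.continuousAt.div hvc.continuousAt hvp.ne').tendsto
      rw [hPc0, zero_div] at ht
      exact ht.mono_left nhdsWithin_le_nhds
  have hv1 : 0 ≤ v θ₁ := by
    have ht : Filter.Tendsto v (𝓝[>] θ₁) (𝓝 (v θ₁)) :=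
      hvc.continuousAt.continuousWithinAt.tendsto
    refine ge_of_tendsto ht ?_
    filter_upwards [Ioo_mem_nhdsGT hlt] with x hx
    exact (hvpos x hx).le
  have hv2 : 0 ≤ v θ₂ := by
    have ht : Filter.Tendsto v (𝓝[<] θ₂) (𝓝 (v θ₂)) :=
      hvc.continuousAt.continuousWithinAt.tendsto
    refine ge_of_tendsto ht ?_
    filter_upwards [Ioo_mem_nhdsLT hlt] with x hx
    exact (hvpos x hx).le
  have hlim1 : Filter.Tendsto g (𝓝[>] θ₁) (𝓝 0) :=
    (hlim θ₁ hP1 hP'1 hv1).mono_left (nhdsWithin_mono _ fun x hx => ne_of_gt hx)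
  have hlim2 : Filter.Tendsto g (𝓝[<] θ₂) (𝓝 0) :=
    (hlim θ₂ hP2 hP'2 hv2).mono_left (nhdsWithin_mono _ fun x hx => ne_of_lt hx)
  have hP0 : ∀ θ ∈ Set.Ioo θ₁ θ₂, P θ = 0 := by
    intro θ hθ
    have hg1 : 0 ≤ g θ := by
      refine le_of_tendsto hlim1 ?_
      filter_upwards [Ioc_mem_nhdsGT hθ.1] with x hx
      exact hmono ⟨hx.1, lt_of_le_of_lt hx.2 hθ.2⟩ hθ hx.2
    have hg2 : g θ ≤ 0 := by
      refine ge_of_tendsto hlim2 ?_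
      filter_upwards [Ico_mem_nhdsLT hθ.2] with x hx
      exact hmono hθ ⟨lt_of_lt_of_le hθ.1 hx.1, hx.2⟩ hx.1
    have hg0 : g θ = 0 := le_antisymm hg2 hg1
    have hvne : v θ ≠ 0 := (hvpos θ hθ).ne'
    simpa [hgdef, div_eq_zero_iff, hvne] using hg0
  intro θ hθ
  have hP'0 : P' θ = 0 := by
    have heq : P =ᶠ[𝓝 θ] fun _ => 0 := by
      filter_upwards [Ioo_mem_nhds hθ.1 hθ.2] with x hx
      exact hP0 x hx
    have h1 : deriv P θ = P' θ := (hP θ).deriv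
    have h2 : deriv P θ = 0 := by
      rw [Filter.EventuallyEq.deriv_eq heq]
      exact deriv_const θ 0
    rw [← h1, h2]
  have hFθ : F θ = 0 := by
    rw [← hPv θ, hP'0, hP0 θ hθ]
    ring
  refine ⟨hFθ, ?_⟩
  have hPθ := hP0 θ hθ
  simp only [hPdef, hFθ, zero_mul, zero_sub, neg_eq_zero, mul_eq_zero] at hPθ
  rcases hPθ with h | h
  · exact h
  · exact absurd h (hvpos θ hθ).ne'

lemma grad_inner_aux (h : E2 → ℝ) (p y : E2) :
    ⟪gradient h p, y⟫ = fderiv ℝ h p y := by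
  simp only [gradient]
  exact InnerProductSpace.toDual_symm_apply

lemma euler_relation_aux (h : E2 → ℝ) (hhom : PosHomog2 h)
    (hC2 : ContDiffOn ℝ 2 h {(0 : E2)}ᶜ) (p : E2) (hp : p ≠ 0) :
    fderiv ℝ h p p = h p := by
  have hmem : {(0 : E2)}ᶜ ∈ 𝓝 p :=
    isOpen_compl_singleton.mem_nhds (by simpa using hp)
  have hdiff : DifferentiableAt ℝ h p :=
    (hC2.contDiffAt hmem).differentiableAt (by norm_num)
  have hline : HasDerivAt (fun t : ℝ => t • p) p 1 := by
    simpa using (hasDerivAt_id (1 : ℝ)).smul_const p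
  have hcomp : HasDerivAt (fun t : ℝ => h (t • p)) (fderiv ℝ h p p) 1 := by
    have h1 : HasFDerivAt h (fderiv ℝ h p) ((1 : ℝ) • p) := by
      rw [one_smul]; exact hdiff.hasFDerivAt
    have := h1.comp_hasDerivAt 1 hline
    exact this
  have heq : (fun t : ℝ => h (t • p)) =ᶠ[𝓝 (1 : ℝ)] fun t => t * h p := by
    filter_upwards [Ioi_mem_nhds (zero_lt_one (α := ℝ))] with t ht
    exact hhom t ht p hp
  have hcomp' : HasDerivAt (fun t : ℝ => t * h p) (fderiv ℝ h p p) 1 :=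
    hcomp.congr_of_eventuallyEq heq.symm
  exact hcomp'.unique (hasDerivAt_mul_const (h p))

lemma gradient_hasFDerivAt_aux (h : E2 → ℝ) (hC2 : ContDiffOn ℝ 2 h {(0 : E2)}ᶜ)
    (p : E2) (hp : p ≠ 0) :
    HasFDerivAt (gradient h)
      (((InnerProductSpace.toDual ℝ E2).symm.toContinuousLinearMap).comp
        (fderiv ℝ (fderiv ℝ h) p)) p := by
  have hmem : {(0 : E2)}ᶜ ∈ 𝓝 p :=
    isOpen_compl_singleton.mem_nhds (by simpa using hp)
  have hΦ : ContDiffAt ℝ 1 (fderiv ℝ h) p :=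
    (hC2.contDiffAt hmem).fderiv_right (by norm_num)
  have hD : HasFDerivAt (fderiv ℝ h) (fderiv ℝ (fderiv ℝ h) p) p :=
    (hΦ.differentiableAt (by norm_num)).hasFDerivAt
  exact ((InnerProductSpace.toDual ℝ E2).symm.toContinuousLinearMap).hasFDerivAt.comp p hD

end AuxHedgehog

open Set Filter Topology
/-- **Martinez-Maure, Lemma 1.** Let `s` be an extremal point of a plane
hedgehog `H_h ⊂ ℝ²` in direction `n ∈ S¹`. Then the connected components
of `x_h⁻¹(s)` on `S¹` are separated from one another by the points `n`
and `-n`: any closed arc `Γ ⊂ S¹` whose two endpoints lie in `x_h⁻¹(s)`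
and whose interior avoids `{n, -n}` is entirely contained in `x_h⁻¹(s)`. -/
theorem plane_hedgehog_extremal_components
    (h : E2 → ℝ) (hhom : PosHomog2 h)
    (hC2 : ContDiffOn ℝ 2 h {(0 : E2)}ᶜ)
    (n : E2) (hn : n ∈ Metric.sphere (0 : E2) 1)
    (s : E2) (hs : s ∈ gradient h '' Metric.sphere (0 : E2) 1)
    (hextr : ∀ p ∈ Metric.sphere (0 : E2) 1, ⟪gradient h p, n⟫ ≤ ⟪s, n⟫)
    -- a closed arc `γ θ = (cos θ) • a + (sin θ) • b`, `θ ∈ [θ₁, θ₂]`, of `S¹`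
    (a b : E2) (ha : ‖a‖ = 1) (hb : ‖b‖ = 1) (hab : ⟪a, b⟫ = 0)
    (θ₁ θ₂ : ℝ) (hθ : θ₁ ≤ θ₂)
    (γ : ℝ → E2) (hγ : ∀ θ : ℝ, γ θ = Real.cos θ • a + Real.sin θ • b)
    -- whose endpoints lie in `x_h⁻¹(s)`
    (hend₁ : gradient h (γ θ₁) = s) (hend₂ : gradient h (γ θ₂) = s)
    -- and whose interior is disjoint from `{n, -n}`
    (hint : ∀ θ ∈ Set.Ioo θ₁ θ₂, γ θ ≠ n ∧ γ θ ≠ -n) :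
    ∀ θ ∈ Set.Icc θ₁ θ₂, gradient h (γ θ) = s := by
  rcases eq_or_lt_of_le hθ with heq | hlt
  · intro θ hθ'
    have hθθ : θ = θ₁ := le_antisymm (heq ▸ hθ'.2) hθ'.1
    rw [hθθ]; exact hend₁
  -- basic inner product facts
  have haa : ⟪a, a⟫ = 1 := by rw [real_inner_self_eq_norm_mul_norm, ha]; norm_num
  have hbb : ⟪b, b⟫ = 1 := by rw [real_inner_self_eq_norm_mul_norm, hb]; norm_num
  have hba : ⟪b, a⟫ = 0 := by rw [real_inner_comm]; exact hab
  have hic : ∀ c₁ s₁ c₂ s₂ : ℝ,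
      ⟪c₁ • a + s₁ • b, c₂ • a + s₂ • b⟫ = c₁ * c₂ + s₁ * s₂ := by
    intro c₁ s₁ c₂ s₂
    simp only [inner_add_left, inner_add_right, real_inner_smul_left,
      real_inner_smul_right, haa, hbb, hab, hba]
    ring
  have norm_one_of : ∀ x : E2, ⟪x, x⟫ = 1 → ‖x‖ = 1 := by
    intro x hx
    have := real_inner_self_eq_norm_mul_norm x
    nlinarith [norm_nonneg x]
  have hnnorm : ‖n‖ = 1 := by simpa using hn
  -- the curve and its derivative
  set γ' : ℝ → E2 := fun θ => (-Real.sin θ) • a + Real.cos θ • b with hγ'def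
  have hγd : ∀ θ, HasDerivAt γ (γ' θ) θ := by
    intro θ
    have hfun : γ = fun t => Real.cos t • a + Real.sin t • b := funext hγ
    rw [hfun]
    exact ((Real.hasDerivAt_cos θ).smul_const a).add ((Real.hasDerivAt_sin θ).smul_const b)
  have hγγ : ∀ θ, ⟪γ θ, γ θ⟫ = 1 := by
    intro θ; rw [hγ θ, hic]; linear_combination Real.sin_sq_add_cos_sq θ
  have hγ'γ' : ∀ θ, ⟪γ' θ, γ' θ⟫ = 1 := by
    intro θ; rw [hγ'def]; rw [hic]; linear_combination Real.sin_sq_add_cos_sq θ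
  have hγγ' : ∀ θ, ⟪γ θ, γ' θ⟫ = 0 := by
    intro θ; rw [hγ θ, hγ'def]; rw [hic]; ring
  have hγnorm : ∀ θ, ‖γ θ‖ = 1 := fun θ => norm_one_of _ (hγγ θ)
  have hγ'norm : ∀ θ, ‖γ' θ‖ = 1 := fun θ => norm_one_of _ (hγ'γ' θ)
  have hγne : ∀ θ, γ θ ≠ 0 := by
    intro θ hzero
    have := hγnorm θ
    rw [hzero] at this
    simp at this
  have hγsph : ∀ θ, γ θ ∈ Metric.sphere (0 : E2) 1 := by
    intro θ; simpa using hγnorm θ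
  -- the hedgehog map along the curve
  set X : ℝ → E2 := fun θ => gradient h (γ θ) with hXdef
  have hXin : ∀ θ (y : E2), ⟪X θ, y⟫ = fderiv ℝ h (γ θ) y := fun θ y =>
    grad_inner_aux h (γ θ) y
  have hD : ∀ θ, HasFDerivAt h (fderiv ℝ h (γ θ)) (γ θ) := by
    intro θ
    have hmem : {(0 : E2)}ᶜ ∈ 𝓝 (γ θ) :=
      isOpen_compl_singleton.mem_nhds (by simpa using hγne θ)
    exact ((hC2.contDiffAt hmem).differentiableAt (by norm_num)).hasFDerivAt
  have hfd : ∀ θ, HasDerivAt (fun t => h (γ t)) (⟪X θ, γ' θ⟫) θ := by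
    intro θ
    rw [hXin θ]
    exact (hD θ).comp_hasDerivAt θ (hγd θ)
  have hEuler : ∀ θ, ⟪X θ, γ θ⟫ = h (γ θ) := by
    intro θ
    rw [hXin θ]
    exact euler_relation_aux h hhom hC2 (γ θ) (hγne θ)
  have hXd : ∀ θ, HasDerivAt X (deriv X θ) θ := by
    intro θ
    have hc := (gradient_hasFDerivAt_aux h hC2 (γ θ) (hγne θ)).comp_hasDerivAt θ (hγd θ)
    exact hc.differentiableAt.hasDerivAt
  -- the derivative of X is orthogonal to γ
  have hperp : ∀ θ, ⟪deriv X θ, γ θ⟫ = 0 := by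
    intro θ
    have hE : (fun t => ⟪X t, γ t⟫ - h (γ t)) = fun _ => (0 : ℝ) :=
      funext fun t => by rw [hEuler t]; ring
    have hder : HasDerivAt (fun t => ⟪X t, γ t⟫ - h (γ t))
        ((⟪X θ, γ' θ⟫ + ⟪deriv X θ, γ θ⟫) - ⟪X θ, γ' θ⟫) θ :=
      ((hXd θ).inner ℝ (hγd θ)).sub (hfd θ)
    have hzero : HasDerivAt (fun t => ⟪X t, γ t⟫ - h (γ t)) 0 θ := by
      rw [hE]; exact hasDerivAt_const θ 0
    have := hder.unique hzero
    linarith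
  set R : ℝ → ℝ := fun θ => ⟪deriv X θ, γ' θ⟫ with hRdef
  have hXf : ∀ θ, deriv X θ = R θ • γ' θ := by
    intro θ
    have hfd2 := frame_decomp_aux (γ θ) (γ' θ) (hγnorm θ) (hγ'norm θ) (hγγ' θ) (deriv X θ)
    rw [hperp θ, zero_smul, zero_add] at hfd2
    exact hfd2
  -- scalar data
  set α : ℝ := ⟪a, n⟫ with hαdef
  set β : ℝ := ⟪b, n⟫ with hβdef
  have hn2 : n = α • a + β • b := by
    have hfd3 := frame_decomp_aux a b ha hb hab n
    rw [real_inner_comm a n, real_inner_comm b n] at hfd3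
    exact hfd3
  have hαβ : α ^ 2 + β ^ 2 = 1 := by
    have h1 : ⟪n, n⟫ = 1 := by rw [real_inner_self_eq_norm_mul_norm, hnnorm]; norm_num
    rw [show n = α • a + β • b from hn2, hic] at h1
    linear_combination h1
  set m : E2 := (-β) • a + α • b with hmdef
  have hmnorm : ‖m‖ = 1 := by
    apply norm_one_of
    show ⟪(-β) • a + α • b, (-β) • a + α • b⟫ = 1
    rw [hic]
    linear_combination hαβ
  have hnm : ⟪n, m⟫ = 0 := by
    rw [show n = α • a + β • b from hn2]
    show ⟪α • a + β • b, (-β) • a + α • b⟫ = 0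
    rw [hic]; ring
  set u : ℝ → ℝ := fun θ => Real.cos θ * α + Real.sin θ * β with hudef
  set v : ℝ → ℝ := fun θ => -Real.sin θ * α + Real.cos θ * β with hvdef
  have hud : ∀ θ, HasDerivAt u (v θ) θ := by
    intro θ
    have hder := ((Real.hasDerivAt_cos θ).mul_const α).add ((Real.hasDerivAt_sin θ).mul_const β)
    refine hder.congr_deriv (Eq.symm ?_)
    rfl
  have hvd : ∀ θ, HasDerivAt v (-u θ) θ := by
    intro θ
    have hder := (((Real.hasDerivAt_sin θ).neg).mul_const α).add ((Real.hasDerivAt_cos θ).mul_const β)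
    refine hder.congr_deriv (Eq.symm ?_)
    show -u θ = -Real.cos θ * α + -Real.sin θ * β
    show -(Real.cos θ * α + Real.sin θ * β) = -Real.cos θ * α + -Real.sin θ * β
    ring
  have hpyth : ∀ θ, u θ ^ 2 + v θ ^ 2 = 1 := by
    intro θ
    simp only [hudef, hvdef]
    linear_combination (α ^ 2 + β ^ 2) * Real.sin_sq_add_cos_sq θ + hαβ
  have hγn : ∀ θ, ⟪γ θ, n⟫ = u θ := by
    intro θ
    rw [hγ θ]
    rw [show n = α • a + β • b from hn2, hic]
  have hγ'n : ∀ θ, ⟪γ' θ, n⟫ = v θ := by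
    intro θ
    show ⟪(-Real.sin θ) • a + Real.cos θ • b, n⟫ = v θ
    rw [show n = α • a + β • b from hn2, hic]
  have hγ'm : ∀ θ, ⟪γ' θ, m⟫ = u θ := by
    intro θ
    show ⟪(-Real.sin θ) • a + Real.cos θ • b, (-β) • a + α • b⟫ = u θ
    rw [hic]
    show -Real.sin θ * -β + Real.cos θ * α = Real.cos θ * α + Real.sin θ * β
    ring
  -- the two scalar coordinates of s - X
  set F : ℝ → ℝ := fun θ => ⟪s, n⟫ - ⟪X θ, n⟫ with hFdef
  set W : ℝ → ℝ := fun θ => ⟪s, m⟫ - ⟪X θ, m⟫ with hWdef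
  have hFd : ∀ θ, HasDerivAt F (-(R θ * v θ)) θ := by
    intro θ
    have h1 := (hasDerivAt_const θ (⟪s, n⟫)).sub ((hXd θ).inner ℝ (hasDerivAt_const θ n))
    refine h1.congr_deriv (Eq.symm ?_)
    rw [hXf θ]
    simp only [inner_zero_right, real_inner_smul_left, hγ'n θ]
    ring
  have hWd : ∀ θ, HasDerivAt W (-(R θ * u θ)) θ := by
    intro θ
    have h1 := (hasDerivAt_const θ (⟪s, m⟫)).sub ((hXd θ).inner ℝ (hasDerivAt_const θ m))
    refine h1.congr_deriv (Eq.symm ?_)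
    rw [hXf θ]
    simp only [inner_zero_right, real_inner_smul_left, hγ'm θ]
    ring
  have hF1 : F θ₁ = 0 := by
    show ⟪s, n⟫ - ⟪X θ₁, n⟫ = 0
    have : X θ₁ = s := hend₁
    rw [this, sub_self]
  have hF2 : F θ₂ = 0 := by
    show ⟪s, n⟫ - ⟪X θ₂, n⟫ = 0
    have : X θ₂ = s := hend₂
    rw [this, sub_self]
  have hW1 : W θ₁ = 0 := by
    show ⟪s, m⟫ - ⟪X θ₁, m⟫ = 0
    have : X θ₁ = s := hend₁
    rw [this, sub_self]
  have hW2 : W θ₂ = 0 := by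
    show ⟪s, m⟫ - ⟪X θ₂, m⟫ = 0
    have : X θ₂ = s := hend₂
    rw [this, sub_self]
  have hFpos : ∀ θ, 0 ≤ F θ := by
    intro θ
    have hh := hextr (γ θ) (hγsph θ)
    show 0 ≤ ⟪s, n⟫ - ⟪X θ, n⟫
    have hh2 : ⟪X θ, n⟫ ≤ ⟪s, n⟫ := hh
    linarith
  have hvne : ∀ θ ∈ Set.Ioo θ₁ θ₂, v θ ≠ 0 := by
    intro θ hθ' hv0
    have hu2 : u θ ^ 2 = 1 := by
      have hp := hpyth θ
      rw [hv0] at hp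
      nlinarith only [hp]
    have hu1 : (u θ - 1) * (u θ + 1) = 0 := by linear_combination hu2
    rcases mul_eq_zero.mp hu1 with h1 | h1
    rotate_left
    · -- u θ + 1 = 0, i.e. u θ = -1
      have hgn : γ θ = -n := by
        rw [← inner_eq_one_iff_of_norm_eq_one (𝕜 := ℝ) (hγnorm θ) (by rw [norm_neg]; exact hnnorm)]
        rw [inner_neg_right, hγn θ]
        linarith
      exact (hint θ hθ').2 hgn
    · -- u θ - 1 = 0, i.e. u θ = 1
      have hgn : γ θ = n := by
        rw [← inner_eq_one_iff_of_norm_eq_one (𝕜 := ℝ) (hγnorm θ) hnnorm]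
        rw [hγn θ]
        linarith
      exact (hint θ hθ').1 hgn
  -- conclusion from the vanishing of F and W
  have hconc : ∀ θ, F θ = 0 → W θ = 0 → gradient h (γ θ) = s := by
    intro θ hF0 hW0
    have hd := frame_decomp_aux n m hnnorm hmnorm hnm (s - X θ)
    rw [inner_sub_left, inner_sub_left] at hd
    have e1 : ⟪s, n⟫ - ⟪X θ, n⟫ = 0 := hF0
    have e2 : ⟪s, m⟫ - ⟪X θ, m⟫ = 0 := hW0
    rw [e1, e2] at hd
    rw [zero_smul, zero_smul, add_zero] at hd
    have hXs : s - X θ = 0 := hd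
    have : X θ = s := by
      have h2 := sub_eq_zero.mp hXs
      exact h2.symm
    exact this
  -- v is continuous and nonvanishing on the interior, hence of constant sign
  have hvcont : Continuous v := by
    have hd : Differentiable ℝ v := fun θ => (hvd θ).differentiableAt
    exact hd.continuous
  have hsign : (∀ θ ∈ Set.Ioo θ₁ θ₂, 0 < v θ) ∨ (∀ θ ∈ Set.Ioo θ₁ θ₂, v θ < 0) := by
    by_contra hcon
    push_neg at hcon
    obtain ⟨⟨x, hx, hvx⟩, ⟨y, hy, hvy⟩⟩ := hcon
    have hvx' : v x < 0 := lt_of_le_of_ne hvx (hvne x hx)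
    have hvy' : 0 < v y := lt_of_le_of_ne hvy (Ne.symm (hvne y hy))
    rcases lt_trichotomy x y with hxy | hxy | hxy
    · have hsub : Set.Ioo (v x) (v y) ⊆ v '' Set.Ioo x y :=
        intermediate_value_Ioo hxy.le hvcont.continuousOn
      obtain ⟨c, hc, hvc0⟩ := hsub ⟨hvx', hvy'⟩
      exact hvne c ⟨lt_trans hx.1 hc.1, lt_trans hc.2 hy.2⟩ hvc0
    · rw [hxy] at hvx'; linarith
    · have hsub : Set.Ioo (v x) (v y) ⊆ v '' Set.Ioo y x :=
        intermediate_value_Ioo' hxy.le hvcont.continuousOn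
      obtain ⟨c, hc, hvc0⟩ := hsub ⟨hvx', hvy'⟩
      exact hvne c ⟨lt_trans hy.1 hc.1, lt_trans hc.2 hx.2⟩ hvc0
  -- in both cases, F and W vanish on the interior
  have hIoo : ∀ θ ∈ Set.Ioo θ₁ θ₂, F θ = 0 ∧ W θ = 0 := by
    rcases hsign with hpos | hneg
    · exact core_lemma_aux θ₁ θ₂ hlt u v F W R hud hvd hFd hWd hpyth hF1 hF2 hW1 hW2
        (fun θ _ => hFpos θ) hpos
    · -- reflect the parametrization
      set ρ : ℝ → ℝ := fun t => θ₁ + θ₂ - t with hρdef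
      have hρd : ∀ t : ℝ, HasDerivAt ρ (-1) t := by
        intro t
        simpa using (hasDerivAt_id t).const_sub (θ₁ + θ₂)
      have hρIoo : ∀ t ∈ Set.Ioo θ₁ θ₂, ρ t ∈ Set.Ioo θ₁ θ₂ := by
        intro t ht
        refine ⟨?_, ?_⟩ <;> simp only [hρdef] <;> linarith [ht.1, ht.2]
      have hρ1 : ρ θ₁ = θ₂ := by simp only [hρdef]; ring
      have hρ2 : ρ θ₂ = θ₁ := by simp only [hρdef]; ring
      set ur : ℝ → ℝ := fun t => u (ρ t) with hurdef
      set vr : ℝ → ℝ := fun t => -v (ρ t) with hvrdef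
      set Fr : ℝ → ℝ := fun t => F (ρ t) with hFrdef
      set Wr : ℝ → ℝ := fun t => -W (ρ t) with hWrdef
      set Rr : ℝ → ℝ := fun t => R (ρ t) with hRrdef
      have hurd : ∀ t, HasDerivAt ur (vr t) t := by
        intro t
        have h2 := (hud (ρ t)).comp t (hρd t)
        refine h2.congr_deriv (Eq.symm ?_)
        simp only [hvrdef]
        ring
      have hvrd : ∀ t, HasDerivAt vr (-ur t) t := by
        intro t
        have h2 := ((hvd (ρ t)).comp t (hρd t)).neg
        refine h2.congr_deriv (Eq.symm ?_)
        simp only [hurdef]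
        ring
      have hFrd : ∀ t, HasDerivAt Fr (-(Rr t * vr t)) t := by
        intro t
        have h2 := (hFd (ρ t)).comp t (hρd t)
        refine h2.congr_deriv (Eq.symm ?_)
        simp only [hRrdef, hvrdef]
        ring
      have hWrd : ∀ t, HasDerivAt Wr (-(Rr t * ur t)) t := by
        intro t
        have h2 := ((hWd (ρ t)).comp t (hρd t)).neg
        refine h2.congr_deriv (Eq.symm ?_)
        simp only [hRrdef, hurdef]
        ring
      have hpythr : ∀ t, ur t ^ 2 + vr t ^ 2 = 1 := by
        intro t
        simp only [hurdef, hvrdef]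
        have := hpyth (ρ t)
        linarith [this]
      have hres := core_lemma_aux θ₁ θ₂ hlt ur vr Fr Wr Rr hurd hvrd hFrd hWrd hpythr
        (by simp only [hFrdef, hρ1]; exact hF2)
        (by simp only [hFrdef, hρ2]; exact hF1)
        (by simp only [hWrdef, hρ1, hW2]; ring)
        (by simp only [hWrdef, hρ2, hW1]; ring)
        (fun t _ => hFpos (ρ t))
        (fun t ht => by
          simp only [hvrdef]
          have := hneg (ρ t) (hρIoo t ht)
          linarith)
      intro θ hθ'
      obtain ⟨hFr0, hWr0⟩ := hres (ρ θ) (hρIoo θ hθ')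
      have hρρ : ρ (ρ θ) = θ := by simp only [hρdef]; ring
      constructor
      · have h3 : F (ρ (ρ θ)) = 0 := hFr0
        rwa [hρρ] at h3
      · have h3 : -W (ρ (ρ θ)) = 0 := hWr0
        rw [hρρ] at h3
        linarith
  -- conclude
  intro θ hθ'
  rcases eq_or_lt_of_le hθ'.1 with h1 | h1
  · rw [← h1]; exact hend₁
  rcases eq_or_lt_of_le hθ'.2 with h2 | h2
  · rw [h2]; exact hend₂
  obtain ⟨hF0, hW0⟩ := hIoo θ ⟨h1, h2⟩
  exact hconc θ hF0 hW0
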